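/- Let A be an m×m real symmetric matrix partitioned as A = [[W, A21ᵀ],[A21, A22]] where W is the top-left c×c block, and let C = [W; A21] ∈ ℝ^{m×c} (W stacked on top of A21) be the first c columns of A. Then the following three statements are equivalent: (i) rank(W) = rank(A); (ii) A = C W⁺ Cᵀ; (iii) A = C (C⁺ A (C⁺)ᵀ) Cᵀ. -/

import Mathlib

open Matrix

/-- `P` is the Moore–Penrose pseudoinverse of `M`. -/
def IsMoorePenrose {m n : Type*} [Fintype m] [Fintype n]
    (M : Matrix m n ℝ) (P : Matrix n m ℝ) : Prop :=
  M * P * M = M ∧ P * M * P = P ∧ (M * P)ᵀ = M * P ∧ (P * M)ᵀ = P * M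

/-- For a symmetric matrix `A = [[W, A21ᵀ],[A21, A22]]` with
`C = [W; A21]` its first `c` columns, the following are equivalent:
(i) `rank W = rank A`; (ii) `A = C W⁺ Cᵀ`; (iii) `A = C (C⁺ A (C⁺)ᵀ) Cᵀ`. -/
theorem nystrom_exact_iff_rank_eq {c r : ℕ}
    (W : Matrix (Fin c) (Fin c) ℝ) (A21 : Matrix (Fin r) (Fin c) ℝ)
    (A22 : Matrix (Fin r) (Fin r) ℝ) (hW : Wᵀ = W) (hA22 : A22ᵀ = A22)
    (A : Matrix (Fin c ⊕ Fin r) (Fin c ⊕ Fin r) ℝ)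
    (hA : A = Matrix.fromBlocks W A21ᵀ A21 A22)
    (C : Matrix (Fin c ⊕ Fin r) (Fin c) ℝ)
    (hC : C = Matrix.fromRows W A21)
    (Wp : Matrix (Fin c) (Fin c) ℝ) (hWp : IsMoorePenrose W Wp)
    (Cp : Matrix (Fin c) (Fin c ⊕ Fin r) ℝ) (hCp : IsMoorePenrose C Cp) :
    (W.rank = A.rank ↔ A = C * Wp * Cᵀ) ∧
      (W.rank = A.rank ↔ A = C * (Cp * A * Cpᵀ) * Cᵀ) := by
  obtain ⟨hW1, hW2, hW3, hW4⟩ := hWp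
  obtain ⟨hC1, hC2, hC3, hC4⟩ := hCp
  set E : Matrix (Fin c ⊕ Fin r) (Fin c) ℝ :=
    Matrix.fromRows (1 : Matrix (Fin c) (Fin c) ℝ) (0 : Matrix (Fin r) (Fin c) ℝ) with hE
  have hAsymm : Aᵀ = A := by
    rw [hA, fromBlocks_transpose, hW, hA22, transpose_transpose]
  have hAE : A * E = C := by
    rw [hA, hC, hE, fromBlocks_mul_fromRows]
    simp
  have hEC : Eᵀ * C = W := by
    rw [hC, hE, transpose_fromRows, fromCols_mul_fromRows]
    simp
  have hCt : Cᵀ = Eᵀ * A := by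
    rw [← hAE, transpose_mul, hAsymm]
  have hWA : W.rank ≤ A.rank := by
    calc W.rank = (Eᵀ * (A * E)).rank := by rw [hAE, hEC]
      _ ≤ (A * E).rank := rank_mul_le_right _ _
      _ ≤ A.rank := rank_mul_le_left _ _
  have hWC : W.rank ≤ C.rank := by
    rw [← hEC]; exact rank_mul_le_right _ _
  have hCA : C.rank ≤ A.rank := by
    rw [← hAE]; exact rank_mul_le_left _ _
  -- (i) → (ii)
  have main : W.rank = A.rank → A = C * Wp * Cᵀ := by
    intro h
    have hle : LinearMap.range C.mulVecLin ≤ LinearMap.range A.mulVecLin := by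
      rw [← hAE, mulVecLin_mul]
      exact LinearMap.range_comp_le_range _ _
    have hfr : A.rank ≤ C.rank := by rw [← h]; exact hWC
    have hrange : LinearMap.range C.mulVecLin = LinearMap.range A.mulVecLin :=
      Submodule.eq_of_le_of_finrank_le hle hfr
    have key : ∀ j : Fin r, ∃ z : Fin c → ℝ,
        W *ᵥ z = (fun i => A21ᵀ i j) ∧ A21 *ᵥ z = (fun i => A22 i j) := by
      intro j
      have hmem : (fun i => A i (Sum.inr j)) ∈ LinearMap.range A.mulVecLin := by
        refine ⟨Pi.single (Sum.inr j) 1, ?_⟩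
        simp [mulVecLin_apply]
        rfl
      rw [← hrange] at hmem
      obtain ⟨z, hz⟩ := hmem
      refine ⟨z, ?_, ?_⟩
      · funext i
        have h1 := congrFun hz (Sum.inl i)
        simpa [hC, hA, mulVecLin_apply] using h1
      · funext i
        have h1 := congrFun hz (Sum.inr i)
        simpa [hC, hA, mulVecLin_apply] using h1
    choose z hz1 hz2 using key
    set Z : Matrix (Fin c) (Fin r) ℝ := Matrix.of (fun i j => z j i) with hZ
    have hWZ : W * Z = A21ᵀ := by
      ext i j
      have h1 := congrFun (hz1 j) i
      simpa [mul_apply, mulVec, dotProduct, hZ] using h1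
    have hAZ : A21 * Z = A22 := by
      ext i j
      have h1 := congrFun (hz2 j) i
      simpa [mul_apply, mulVec, dotProduct, hZ] using h1
    have hA21 : A21 = Zᵀ * W := by
      have h1 := congrArg Matrix.transpose hWZ
      rw [transpose_mul, hW, transpose_transpose] at h1
      exact h1.symm
    have e1 : W * Wp * A21ᵀ = A21ᵀ := by
      rw [← hWZ, ← Matrix.mul_assoc, hW1]
    have e2 : A21 * Wp * W = A21 := by
      rw [hA21, Matrix.mul_assoc Zᵀ W Wp, Matrix.mul_assoc Zᵀ (W * Wp) W, hW1]
    have e3 : A21 * Wp * A21ᵀ = A22 := by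
      rw [← hWZ, ← Matrix.mul_assoc, e2, hAZ]
    rw [hA, hC, transpose_fromRows, fromRows_mul, fromRows_mul_fromCols, hW,
      hW1, e1, e2, e3]
  -- (ii) → (i)
  have back2 : A = C * Wp * Cᵀ → W.rank = A.rank := by
    intro h
    refine le_antisymm hWA ?_
    calc A.rank = (C * Wp * Cᵀ).rank := by rw [← h]
      _ ≤ (C * Wp).rank := rank_mul_le_left _ _
      _ ≤ Wp.rank := rank_mul_le_right _ _
      _ = (Wp * W * Wp).rank := by rw [hW2]
      _ ≤ (Wp * W).rank := rank_mul_le_left _ _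
      _ ≤ W.rank := rank_mul_le_right _ _
  -- (i) → (iii)
  have fwd3 : W.rank = A.rank → A = C * (Cp * A * Cpᵀ) * Cᵀ := by
    intro h
    have h2 := main h
    have hproj : C * Cp * A = A := by
      rw [h2, ← Matrix.mul_assoc, ← Matrix.mul_assoc, hC1]
    have hAC : A * (C * Cp) = A := by
      have h1 := congrArg Matrix.transpose hproj
      rw [transpose_mul, hAsymm, hC3] at h1
      exact h1
    have hCpt : Cpᵀ * Cᵀ = C * Cp := by
      rw [← transpose_mul, hC3]
    calc A = A * (C * Cp) := hAC.symm
      _ = (C * Cp * A) * (C * Cp) := by rw [hproj]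
      _ = (C * Cp * A) * (Cpᵀ * Cᵀ) := by rw [hCpt]
      _ = C * (Cp * A * Cpᵀ) * Cᵀ := by simp only [Matrix.mul_assoc]
  -- (iii) → (i)
  have back3 : A = C * (Cp * A * Cpᵀ) * Cᵀ → W.rank = A.rank := by
    intro h
    set N : Matrix (Fin c) (Fin c) ℝ := Cp * A * Cpᵀ with hN
    refine le_antisymm hWA ?_
    have h1 : Cᵀ = W * N * Cᵀ := by
      calc Cᵀ = Eᵀ * A := hCt
        _ = Eᵀ * (C * N * Cᵀ) := by rw [← h]
        _ = (Eᵀ * C) * N * Cᵀ := by simp only [Matrix.mul_assoc]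
        _ = W * N * Cᵀ := by rw [hEC]
    have h2 : C = C * Nᵀ * W := by
      have h3 := congrArg Matrix.transpose h1
      rw [transpose_transpose, transpose_mul, transpose_mul, hW, transpose_transpose,
        ← Matrix.mul_assoc] at h3
      exact h3
    have hCW : C.rank ≤ W.rank := by
      rw [h2]
      exact rank_mul_le_right _ _
    calc A.rank = (C * N * Cᵀ).rank := by rw [← h]
      _ ≤ (C * N).rank := rank_mul_le_left _ _
      _ ≤ C.rank := rank_mul_le_left _ _
      _ ≤ W.rank := hCW
  exact ⟨⟨main, back2⟩, ⟨fwd3, back3⟩⟩
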